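/- If $x_1, \ldots, x_n$ are real numbers ($n \ge 2$) with sum $b_1$ and sum of squares $S = b_1^2 - 2b_2$, then for each index $k$, $n x_k^2 - 2 b_1 x_k + 2(n-1) b_2 - (n-2) b_1^2 \le 0$, where $b_2 = \sum_{i<j} x_i x_j$. -/
import Mathlib

open Finset

/-- For reals `x₁, …, xₙ` (`n ≥ 2`) with `b₁ = ∑ xᵢ`,
`b₂ = ∑_{i<j} xᵢxⱼ`, every `x_k` satisfies
`n x_k² - 2b₁ x_k + 2(n-1)b₂ - (n-2)b₁² ≤ 0`. -/
theorem stmt15 (n : ℕ) (hn : 2 ≤ n) (x : Fin n → ℝ)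
    (b1 b2 : ℝ) (hb1 : b1 = ∑ i : Fin n, x i)
    (hb2 : b2 = ∑ i : Fin n, ∑ j : Fin n, if i < j then x i * x j else 0) :
    ∀ k : Fin n,
      (n : ℝ) * x k ^ 2 - 2 * b1 * x k + 2 * (n - 1) * b2
        - (n - 2) * b1 ^ 2 ≤ 0 := by
  intro k
  have hid : b1 ^ 2 = (∑ i : Fin n, x i ^ 2) + 2 * b2 := by
    have h1 : b1 ^ 2 = ∑ i : Fin n, ∑ j : Fin n, x i * x j := by
      rw [hb1, sq, Finset.sum_mul_sum]
    have h2 : ∀ i j : Fin n, x i * x j =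
        (if i < j then x i * x j else 0) + (if j < i then x i * x j else 0)
          + (if i = j then x i * x j else 0) := by
      intro i j
      rcases lt_trichotomy i j with h | h | h
      · simp [h, h.ne, not_lt.2 h.le]
      · simp [h]
      · simp [h, h.ne', not_lt.2 h.le]
    have h3 : (∑ i : Fin n, ∑ j : Fin n, if j < i then x i * x j else 0) = b2 := by
      rw [hb2, Finset.sum_comm]
      exact Finset.sum_congr rfl fun i _ => Finset.sum_congr rfl fun j _ => by
        rcases lt_or_ge i j with h | h <;> simp [h, not_lt.2, mul_comm]
    have h4 : (∑ i : Fin n, ∑ j : Fin n, if i = j then x i * x j else 0)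
        = ∑ i : Fin n, x i ^ 2 := by
      refine Finset.sum_congr rfl fun i _ => ?_
      rw [Finset.sum_ite_eq (Finset.univ) i (fun j => x i * x j)]
      simp [sq]
    calc b1 ^ 2 = ∑ i : Fin n, ∑ j : Fin n, x i * x j := h1
      _ = (∑ i : Fin n, ∑ j : Fin n, if i < j then x i * x j else 0)
          + (∑ i : Fin n, ∑ j : Fin n, if j < i then x i * x j else 0)
          + (∑ i : Fin n, ∑ j : Fin n, if i = j then x i * x j else 0) := by
        simp_rw [← Finset.sum_add_distrib]
        exact Finset.sum_congr rfl fun i _ => Finset.sum_congr rfl fun j _ => h2 i j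
      _ = (∑ i : Fin n, x i ^ 2) + 2 * b2 := by rw [h3, h4, ← hb2]; ring
  set s : Finset (Fin n) := Finset.univ.erase k with hs
  have hsum : (∑ i ∈ s, x i) + x k = b1 := by
    rw [hb1]; exact Finset.sum_erase_add _ _ (Finset.mem_univ k)
  have hsq : (∑ i ∈ s, x i ^ 2) + x k ^ 2 = ∑ i : Fin n, x i ^ 2 := by
    exact Finset.sum_erase_add _ _ (Finset.mem_univ k)
  have hcard : (#s : ℝ) = (n : ℝ) - 1 := by
    have : #s = n - 1 := by
      rw [hs, Finset.card_erase_of_mem (Finset.mem_univ k)]; simp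
    rw [this]
    have : (1:ℕ) ≤ n := by omega
    push_cast [Nat.cast_sub this]
    ring
  have hcs : (∑ i ∈ s, x i) ^ 2 ≤ ((n:ℝ) - 1) * ∑ i ∈ s, x i ^ 2 := by
    have := sq_sum_le_card_mul_sum_sq (s := s) (f := x)
    calc (∑ i ∈ s, x i) ^ 2 ≤ (#s : ℝ) * ∑ i ∈ s, x i ^ 2 := by exact_mod_cast this
      _ = ((n:ℝ) - 1) * ∑ i ∈ s, x i ^ 2 := by rw [hcard]
  have hcs' : (b1 - x k) ^ 2 ≤ ((n:ℝ) - 1) * ((∑ i : Fin n, x i ^ 2) - x k ^ 2) := by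
    rw [← hsum, ← hsq]; ring_nf; ring_nf at hcs; linarith
  have hb2' : 2 * ((n:ℝ) - 1) * b2 = ((n:ℝ) - 1) * (b1 ^ 2 - ∑ i : Fin n, x i ^ 2) := by
    rw [show (2:ℝ) * ((n:ℝ)-1) * b2 = ((n:ℝ)-1) * (2*b2) by ring]
    rw [show (2:ℝ)*b2 = b1^2 - ∑ i : Fin n, x i ^ 2 by linarith]
  nlinarith [hcs', hb2']
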